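/- L²-stability of the symplectic local discontinuous Galerkin method (Corollary 2.4): Under the mesh setup of the LDG method with periodic fluxes, suppose for each time step n = 0, 1, …, N−1 the cell equations (E1_j), (E2_j) hold linking the level-n solution (u_j^n)_{j=1..J} to the level-(n+1) solution (u_j^{n+1})_{j=1..J}, with step-dependent auxiliary variables (ψ_j^{n+1/2})_{j} and step-dependent real noise increments ΔW̃_n. Then the discrete L²-norm is constant in n: ∑_{j=1}^{J} ∫_{I_j} |u_j^N(x)|² dx = ∑_{j=1}^{J} ∫_{I_j} |u_j^0(x)|² dx for every N. -/

import Mathlib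

open MeasureTheory Complex ComplexConjugate

lemma int_conj (f : ℝ → ℂ) (a b : ℝ) (hab : a ≤ b) :
    (∫ t in a..b, conj (f t)) = conj (∫ t in a..b, f t) := by
  rw [intervalIntegral.integral_of_le hab, intervalIntegral.integral_of_le hab,
    integral_conj]

lemma conj_contDiffOn {f : ℝ → ℂ} {s : Set ℝ} (hf : ContDiffOn ℝ 1 f s) :
    ContDiffOn ℝ 1 (fun y => conj (f y)) s :=
  Complex.conjCLE.toContinuousLinearMap.contDiff.comp_contDiffOn hf

lemma derivWithin_conj (f : ℝ → ℂ) {s : Set ℝ} {t : ℝ} (h : UniqueDiffWithinAt ℝ s t) :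
    derivWithin (fun y => conj (f y)) s t = conj (derivWithin f s t) := by
  simpa using derivWithin.star (f := f) (s := s) (x := t)

lemma self_conj_real (f : ℝ → ℂ) (a b : ℝ) (hab : a ≤ b) :
    conj (∫ t in a..b, f t * conj (f t)) = ∫ t in a..b, f t * conj (f t) := by
  rw [← int_conj _ _ _ hab]
  apply intervalIntegral.integral_congr
  intro t _
  simp [mul_comm]

lemma cell_C1 (a b : ℝ) (hab : a < b) (f g : ℝ → ℂ)
    (hf : ContDiffOn ℝ 1 f (Set.Icc a b)) (hg : ContDiffOn ℝ 1 g (Set.Icc a b)) (w : ℂ)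
    (h2 : (∫ t in a..b, f t * conj (f t))
        + (∫ t in a..b, g t * derivWithin (fun y => conj (f y)) (Set.Icc a b) t)
        - (g b * conj (f b) - w * conj (f a)) = 0) :
    (∫ t in a..b, f t * derivWithin (fun y => conj (g y)) (Set.Icc a b) t)
      = (∫ t in a..b, f t * conj (f t)) + conj w * f a - f a * conj (g a) := by
  have hab' : a ≤ b := hab.le
  have hsub : Set.uIcc a b = Set.Icc a b := Set.uIcc_of_le hab'
  have hud : UniqueDiffOn ℝ (Set.Icc a b) := uniqueDiffOn_Icc hab
  set s := Set.Icc a b with hs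
  have hgc : ContDiffOn ℝ 1 (fun y => conj (g y)) s := conj_contDiffOn hg
  have hdf : ContinuousOn (derivWithin f s) s := hf.continuousOn_derivWithin hud le_rfl
  have hdgc : ContinuousOn (derivWithin (fun y => conj (g y)) s) s :=
    hgc.continuousOn_derivWithin hud le_rfl
  have hcf : ContinuousOn f s := hf.continuousOn
  have hcg : ContinuousOn g s := hg.continuousOn
  have hcgc : ContinuousOn (fun y => conj (g y)) s := hgc.continuousOn
  -- integrability
  have intY : IntervalIntegrable (fun t => derivWithin f s t * conj (g t)) volume a b := by
    apply ContinuousOn.intervalIntegrable; rw [hsub]; exact hdf.mul hcgc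
  have intX : IntervalIntegrable (fun t => f t * derivWithin (fun y => conj (g y)) s t)
      volume a b := by
    apply ContinuousOn.intervalIntegrable; rw [hsub]; exact hcf.mul hdgc
  have ibp : (∫ t in a..b, (derivWithin f s t * conj (g t)
        + f t * derivWithin (fun y => conj (g y)) s t))
      = f b * conj (g b) - f a * conj (g a) := by
    apply intervalIntegral.integral_deriv_mul_eq_sub_of_hasDerivWithinAt
    · intro t ht
      rw [hsub] at ht ⊢
      exact ((hf.differentiableOn one_ne_zero) t ht).hasDerivWithinAt
    · intro t ht
      rw [hsub] at ht ⊢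
      exact ((hgc.differentiableOn one_ne_zero) t ht).hasDerivWithinAt
    · exact (by apply ContinuousOn.intervalIntegrable; rw [hsub]; exact hdf)
    · exact (by apply ContinuousOn.intervalIntegrable; rw [hsub]; exact hdgc)
  have ibp2 : (∫ t in a..b, derivWithin f s t * conj (g t))
      + (∫ t in a..b, f t * derivWithin (fun y => conj (g y)) s t)
      = f b * conj (g b) - f a * conj (g a) := by
    rw [← intervalIntegral.integral_add intY intX]; exact ibp
  have key : (∫ t in a..b, derivWithin f s t * conj (g t))
      = conj (∫ t in a..b, g t * derivWithin (fun y => conj (f y)) s t) := by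
    rw [← int_conj _ _ _ hab']
    apply intervalIntegral.integral_congr
    intro t ht
    rw [hsub] at ht
    show derivWithin f s t * conj (g t) = conj (g t * derivWithin (fun y => conj (f y)) s t)
    rw [map_mul, derivWithin_conj f (hud t ht), Complex.conj_conj, mul_comm]
  have h2c := congrArg (starRingEnd ℂ) h2
  simp only [map_add, map_sub, map_mul, map_zero, Complex.conj_conj,
    self_conj_real f a b hab'] at h2c
  have real := self_conj_real f a b hab'
  linear_combination ibp2 - key - h2c


lemma flux_cancel (J : ℕ) (hJ : 1 ≤ J) (A B : ℕ → ℂ) :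
    ∑ c ∈ Finset.range J, (if c + 1 = J then A 0 else A (c + 1)) * conj (B c)
      = ∑ c ∈ Finset.range J, conj (if c = 0 then B (J - 1) else B (c - 1)) * A c := by
  apply Finset.sum_bij' (i := fun c _ => if c + 1 = J then 0 else c + 1)
    (j := fun c _ => if c = 0 then J - 1 else c - 1)
  · intro c hc
    simp only [Finset.mem_range] at *
    split <;> omega
  · intro c hc
    simp only [Finset.mem_range] at *
    split <;> omega
  · intro c hc
    simp only [Finset.mem_range] at hc
    by_cases h : c + 1 = J
    · have h0 : c = 0 → J - 1 = c := by omega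
      simp [h]
      omega
    · simp [h]
  · intro c hc
    simp only [Finset.mem_range] at hc
    by_cases h : c = 0
    · have h1 : J - 1 + 1 = J := by omega
      simp [h, h1]
    · have h1 : c - 1 + 1 = c := by omega
      have h2 : ¬ (c - 1 + 1 = J) := by omega
      simp [h, h1, h2]
      omega
  · intro c hc
    simp only [Finset.mem_range] at hc
    by_cases h : c + 1 = J
    · have hc' : J - 1 = c := by omega
      simp [h, hc', mul_comm]
    · have h1 : ¬ (c + 1 = 0) := by omega
      simp [h, h1, mul_comm]


lemma ptwise (z w : ℂ) :
    (z - w) * conj ((w + z) / 2) + conj ((z - w) * conj ((w + z) / 2))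
      = (Complex.normSq z : ℂ) - (Complex.normSq w : ℂ) := by
  rw [← Complex.mul_conj, ← Complex.mul_conj]
  simp only [map_mul, map_sub, map_add, map_div₀, Complex.conj_conj]
  have h2 : conj (2 : ℂ) = 2 := Complex.conj_ofNat 2
  rw [h2]
  ring

lemma ldg_step (Δt : ℝ) (J : ℕ) (hJ : 1 ≤ J) (x : ℕ → ℝ) (hx : ∀ j < J, x j < x (j + 1))
    (u0 u1 f m : ℕ → ℝ → ℂ)
    (hu0 : ∀ c < J, ContDiffOn ℝ 1 (u0 c) (Set.Icc (x c) (x (c + 1))))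
    (hu1 : ∀ c < J, ContDiffOn ℝ 1 (u1 c) (Set.Icc (x c) (x (c + 1))))
    (hf : ∀ c < J, ContDiffOn ℝ 1 (f c) (Set.Icc (x c) (x (c + 1))))
    (Qh : ℝ → ℝ) (hQ : Continuous Qh) (W : ℝ → ℝ) (hW : Continuous W)
    (hm : ∀ c, m c = fun t => (u0 c t + u1 c t) / 2)
    (hE1 : ∀ c < J,
      Complex.I * (∫ t in (x c)..(x (c + 1)), (u1 c t - u0 c t) * conj (m c t))
        - (Δt : ℂ) * ((if c + 1 = J then f 0 (x 0) else f (c + 1) (x (c + 1)))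
              * conj (m c (x (c + 1)))
            - f c (x c) * conj (m c (x c)))
        + (Δt : ℂ) * (∫ t in (x c)..(x (c + 1)),
            (f c t * derivWithin (fun y => conj (m c y)) (Set.Icc (x c) (x (c + 1))) t
              - (Qh t : ℂ) * (m c t * conj (m c t))))
        - (∫ t in (x c)..(x (c + 1)), m c t * conj (m c t) * (W t : ℂ)) = 0)
    (hE2 : ∀ c < J,
      (∫ t in (x c)..(x (c + 1)), f c t * conj (f c t))
        + (∫ t in (x c)..(x (c + 1)),
            m c t * derivWithin (fun y => conj (f c y)) (Set.Icc (x c) (x (c + 1))) t)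
        - (m c (x (c + 1)) * conj (f c (x (c + 1)))
            - (if c = 0 then m (J - 1) (x J) else m (c - 1) (x c))
                * conj (f c (x c))) = 0) :
    ∑ c ∈ Finset.range J, ∫ t in (x c)..(x (c + 1)), Complex.normSq (u1 c t)
      = ∑ c ∈ Finset.range J, ∫ t in (x c)..(x (c + 1)), Complex.normSq (u0 c t) := by
  -- basic facts per cell
  have hmreg : ∀ c < J, ContDiffOn ℝ 1 (m c) (Set.Icc (x c) (x (c + 1))) := by
    intro c hc
    rw [hm c]
    exact ((hu0 c hc).add (hu1 c hc)).div_const 2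
  -- the key per-cell identity
  have key : ∀ c < J,
      Complex.I * (∫ t in (x c)..(x (c + 1)), (u1 c t - u0 c t) * conj (m c t))
        = (Δt : ℂ) * ((if c + 1 = J then f 0 (x 0) else f (c + 1) (x (c + 1)))
              * conj (m c (x (c + 1))))
          - (Δt : ℂ) * (conj (if c = 0 then m (J - 1) (x J) else m (c - 1) (x c)) * f c (x c))
          - (Δt : ℂ) * ((∫ t in (x c)..(x (c + 1)), Complex.normSq (f c t) : ℝ) : ℂ)
          + (Δt : ℂ) * ((∫ t in (x c)..(x (c + 1)), Qh t * Complex.normSq (m c t) : ℝ) : ℂ)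
          + ((∫ t in (x c)..(x (c + 1)), Complex.normSq (m c t) * W t : ℝ) : ℂ) := by
    intro c hc
    have hab : x c < x (c + 1) := hx c hc
    have hab' : x c ≤ x (c + 1) := hab.le
    have hsub : Set.uIcc (x c) (x (c + 1)) = Set.Icc (x c) (x (c + 1)) := Set.uIcc_of_le hab'
    have hud : UniqueDiffOn ℝ (Set.Icc (x c) (x (c + 1))) := uniqueDiffOn_Icc hab
    have hcm : ContinuousOn (m c) (Set.Icc (x c) (x (c + 1))) := (hmreg c hc).continuousOn
    have hcf : ContinuousOn (f c) (Set.Icc (x c) (x (c + 1))) := (hf c hc).continuousOn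
    have hdmc : ContinuousOn
        (derivWithin (fun y => conj (m c y)) (Set.Icc (x c) (x (c + 1))))
        (Set.Icc (x c) (x (c + 1))) :=
      (conj_contDiffOn (hmreg c hc)).continuousOn_derivWithin hud le_rfl
    have i1 : IntervalIntegrable
        (fun t => f c t * derivWithin (fun y => conj (m c y))
          (Set.Icc (x c) (x (c + 1))) t) volume (x c) (x (c + 1)) := by
      apply ContinuousOn.intervalIntegrable; rw [hsub]; exact hcf.mul hdmc
    have i2 : IntervalIntegrable
        (fun t => (Qh t : ℂ) * (m c t * conj (m c t))) volume (x c) (x (c + 1)) := by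
      apply ContinuousOn.intervalIntegrable; rw [hsub]
      exact ((continuous_ofReal.comp hQ).continuousOn).mul
        (hcm.mul ((continuous_conj.comp_continuousOn hcm)))
    have hsplit : (∫ t in (x c)..(x (c + 1)),
          (f c t * derivWithin (fun y => conj (m c y)) (Set.Icc (x c) (x (c + 1))) t
            - (Qh t : ℂ) * (m c t * conj (m c t))))
        = (∫ t in (x c)..(x (c + 1)),
            f c t * derivWithin (fun y => conj (m c y)) (Set.Icc (x c) (x (c + 1))) t)
          - (∫ t in (x c)..(x (c + 1)), (Qh t : ℂ) * (m c t * conj (m c t))) :=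
      intervalIntegral.integral_sub i1 i2
    have hC1 := cell_C1 (x c) (x (c + 1)) hab (f c) (m c) (hf c hc) (hmreg c hc)
      (if c = 0 then m (J - 1) (x J) else m (c - 1) (x c)) (hE2 c hc)
    have hF : (∫ t in (x c)..(x (c + 1)), f c t * conj (f c t))
        = ((∫ t in (x c)..(x (c + 1)), Complex.normSq (f c t) : ℝ) : ℂ) := by
      rw [← intervalIntegral.integral_ofReal]
      apply intervalIntegral.integral_congr
      intro t _
      simp [Complex.mul_conj]
    have hQr : (∫ t in (x c)..(x (c + 1)), (Qh t : ℂ) * (m c t * conj (m c t)))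
        = ((∫ t in (x c)..(x (c + 1)), Qh t * Complex.normSq (m c t) : ℝ) : ℂ) := by
      rw [← intervalIntegral.integral_ofReal]
      apply intervalIntegral.integral_congr
      intro t _
      simp [Complex.mul_conj]
    have hDr : (∫ t in (x c)..(x (c + 1)), m c t * conj (m c t) * (W t : ℂ))
        = ((∫ t in (x c)..(x (c + 1)), Complex.normSq (m c t) * W t : ℝ) : ℂ) := by
      rw [← intervalIntegral.integral_ofReal]
      apply intervalIntegral.integral_congr
      intro t _
      simp [Complex.mul_conj]
    have e1 := hE1 c hc
    rw [hsplit, hC1, hF, hQr, hDr] at e1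
    rw [hF] at *
    linear_combination e1
  -- sum the per-cell identities
  have hsum : Complex.I * (∑ c ∈ Finset.range J,
        ∫ t in (x c)..(x (c + 1)), (u1 c t - u0 c t) * conj (m c t))
      = (Δt : ℂ) * (∑ c ∈ Finset.range J,
            (if c + 1 = J then f 0 (x 0) else f (c + 1) (x (c + 1)))
              * conj (m c (x (c + 1))))
        - (Δt : ℂ) * (∑ c ∈ Finset.range J,
            conj (if c = 0 then m (J - 1) (x J) else m (c - 1) (x c)) * f c (x c))
        - (Δt : ℂ) * ((∑ c ∈ Finset.range J,
            ∫ t in (x c)..(x (c + 1)), Complex.normSq (f c t) : ℝ) : ℂ)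
        + (Δt : ℂ) * ((∑ c ∈ Finset.range J,
            ∫ t in (x c)..(x (c + 1)), Qh t * Complex.normSq (m c t) : ℝ) : ℂ)
        + ((∑ c ∈ Finset.range J,
            ∫ t in (x c)..(x (c + 1)), Complex.normSq (m c t) * W t : ℝ) : ℂ) := by
    rw [Finset.mul_sum]
    rw [Finset.sum_congr rfl (fun c hc => key c (Finset.mem_range.mp hc))]
    push_cast
    rw [Finset.sum_add_distrib, Finset.sum_add_distrib, Finset.sum_sub_distrib,
      Finset.sum_sub_distrib, ← Finset.mul_sum, ← Finset.mul_sum, ← Finset.mul_sum,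
      ← Finset.mul_sum]
  have hcanc : (∑ c ∈ Finset.range J,
        (if c + 1 = J then f 0 (x 0) else f (c + 1) (x (c + 1))) * conj (m c (x (c + 1))))
      = ∑ c ∈ Finset.range J,
          conj (if c = 0 then m (J - 1) (x J) else m (c - 1) (x c)) * f c (x c) := by
    have h := flux_cancel J hJ (fun c => f c (x c)) (fun c => m c (x (c + 1)))
    rw [h]
    apply Finset.sum_congr rfl
    intro c hc
    simp only [Finset.mem_range] at hc
    by_cases h0 : c = 0
    · rw [if_pos h0, if_pos h0, Nat.sub_add_cancel hJ]
    · rw [if_neg h0, if_neg h0, Nat.sub_add_cancel (by omega : 1 ≤ c)]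
  rw [hcanc] at hsum
  -- imaginary part
  have hre : (∑ c ∈ Finset.range J,
      ∫ t in (x c)..(x (c + 1)), (u1 c t - u0 c t) * conj (m c t)).re = 0 := by
    have h := congrArg Complex.im hsum
    simpa using h
  -- real part extraction
  have hA : ∀ c < J,
      (∫ t in (x c)..(x (c + 1)), (u1 c t - u0 c t) * conj (m c t))
        + conj (∫ t in (x c)..(x (c + 1)), (u1 c t - u0 c t) * conj (m c t))
      = (((∫ t in (x c)..(x (c + 1)), Complex.normSq (u1 c t))
          - (∫ t in (x c)..(x (c + 1)), Complex.normSq (u0 c t)) : ℝ) : ℂ) := by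
    intro c hc
    have hab : x c < x (c + 1) := hx c hc
    have hab' : x c ≤ x (c + 1) := hab.le
    have hsub : Set.uIcc (x c) (x (c + 1)) = Set.Icc (x c) (x (c + 1)) := Set.uIcc_of_le hab'
    have hcm : ContinuousOn (m c) (Set.Icc (x c) (x (c + 1))) := (hmreg c hc).continuousOn
    have hint : IntervalIntegrable (fun t => (u1 c t - u0 c t) * conj (m c t))
        volume (x c) (x (c + 1)) := by
      apply ContinuousOn.intervalIntegrable; rw [hsub]
      exact (((hu1 c hc).continuousOn).sub ((hu0 c hc).continuousOn)).mul
        (continuous_conj.comp_continuousOn hcm)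
    have hintc : IntervalIntegrable (fun t => conj ((u1 c t - u0 c t) * conj (m c t)))
        volume (x c) (x (c + 1)) := by
      apply ContinuousOn.intervalIntegrable; rw [hsub]
      exact continuous_conj.comp_continuousOn
        ((((hu1 c hc).continuousOn).sub ((hu0 c hc).continuousOn)).mul
          (continuous_conj.comp_continuousOn hcm))
    rw [← int_conj _ _ _ hab', ← intervalIntegral.integral_add hint hintc]
    have hpt : ∀ t, (u1 c t - u0 c t) * conj (m c t)
          + conj ((u1 c t - u0 c t) * conj (m c t))
        = (Complex.normSq (u1 c t) : ℂ) - (Complex.normSq (u0 c t) : ℂ) := by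
      intro t
      rw [hm c]
      exact ptwise (u1 c t) (u0 c t)
    rw [intervalIntegral.integral_congr (g := fun t =>
        (Complex.normSq (u1 c t) : ℂ) - (Complex.normSq (u0 c t) : ℂ)) (fun t _ => hpt t)]
    have j1 : IntervalIntegrable (fun t => Complex.normSq (u1 c t)) volume (x c) (x (c+1)) := by
      apply ContinuousOn.intervalIntegrable; rw [hsub]
      exact Complex.continuous_normSq.comp_continuousOn (hu1 c hc).continuousOn
    have j0 : IntervalIntegrable (fun t => Complex.normSq (u0 c t)) volume (x c) (x (c+1)) := by
      apply ContinuousOn.intervalIntegrable; rw [hsub]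
      exact Complex.continuous_normSq.comp_continuousOn (hu0 c hc).continuousOn
    have j1' : IntervalIntegrable (fun t => ((Complex.normSq (u1 c t) : ℝ) : ℂ))
        volume (x c) (x (c+1)) := by
      apply ContinuousOn.intervalIntegrable; rw [hsub]
      exact continuous_ofReal.comp_continuousOn
        (Complex.continuous_normSq.comp_continuousOn (hu1 c hc).continuousOn)
    have j0' : IntervalIntegrable (fun t => ((Complex.normSq (u0 c t) : ℝ) : ℂ))
        volume (x c) (x (c+1)) := by
      apply ContinuousOn.intervalIntegrable; rw [hsub]
      exact continuous_ofReal.comp_continuousOn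
        (Complex.continuous_normSq.comp_continuousOn (hu0 c hc).continuousOn)
    rw [intervalIntegral.integral_sub j1' j0']
    rw [intervalIntegral.integral_ofReal, intervalIntegral.integral_ofReal]
    push_cast
    ring
  -- sum up hA
  have hAsum : (∑ c ∈ Finset.range J,
        ∫ t in (x c)..(x (c + 1)), (u1 c t - u0 c t) * conj (m c t))
      + conj (∑ c ∈ Finset.range J,
          ∫ t in (x c)..(x (c + 1)), (u1 c t - u0 c t) * conj (m c t))
      = ((∑ c ∈ Finset.range J, ((∫ t in (x c)..(x (c + 1)), Complex.normSq (u1 c t))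
          - (∫ t in (x c)..(x (c + 1)), Complex.normSq (u0 c t))) : ℝ) : ℂ) := by
    rw [map_sum, ← Finset.sum_add_distrib]
    push_cast
    exact Finset.sum_congr rfl (fun c hc => by
      have := hA c (Finset.mem_range.mp hc)
      push_cast at this
      exact this)
  rw [Complex.add_conj, hre] at hAsum
  norm_num at hAsum
  have hzero : (∑ c ∈ Finset.range J, ∫ t in (x c)..(x (c + 1)), Complex.normSq (u1 c t))
      - (∑ c ∈ Finset.range J, ∫ t in (x c)..(x (c + 1)), Complex.normSq (u0 c t)) = 0 := by
    exact_mod_cast hAsum.symm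
  linarith


/-- L²-stability of the symplectic local discontinuous Galerkin method (Corollary 2.4).
Cells are indexed by `c = 0, …, J−1` with cell `[x c, x (c+1)]`, `x 0 = L_f`, `x J = L_r`,
and periodic identification `x 0 ≡ x J`.  `u n c` is the level-`n` numerical solution on
cell `c`, `ψ n c` the step-`n` auxiliary variable, `um n c = (u n c + u (n+1) c)/2` the
midpoint, and `ΔW n` the step-`n` real noise increment.  If the cell equations (E1), (E2)
hold for every time step `n < N` and every cell, then the discrete L²-norm is constant:
`∑_c ∫_{I_c} |u N|² = ∑_c ∫_{I_c} |u 0|²`. -/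
theorem ldg_L2_stability
    (Δt Lf Lr : ℝ) (hΔt : 0 < Δt) (J : ℕ) (hJ : 1 ≤ J) (N : ℕ)
    (x : ℕ → ℝ) (hx : ∀ j < J, x j < x (j + 1)) (hxf : x 0 = Lf) (hxr : x J = Lr)
    (u ψ : ℕ → ℕ → ℝ → ℂ)
    (hureg : ∀ n ≤ N, ∀ c < J, ContDiffOn ℝ 1 (u n c) (Set.Icc (x c) (x (c + 1))))
    (hψreg : ∀ n < N, ∀ c < J, ContDiffOn ℝ 1 (ψ n c) (Set.Icc (x c) (x (c + 1))))
    (Qh : ℝ → ℝ) (hQ : Continuous Qh)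
    (ΔW : ℕ → ℝ → ℝ) (hW : ∀ n < N, Continuous (ΔW n))
    (um : ℕ → ℕ → ℝ → ℂ)
    (hum : ∀ n c, um n c = fun t => (u n c t + u (n + 1) c t) / 2)
    (hE1 : ∀ n < N, ∀ c < J,
      Complex.I * (∫ t in (x c)..(x (c + 1)), (u (n + 1) c t - u n c t) * conj (um n c t))
        - (Δt : ℂ) * ((if c + 1 = J then ψ n 0 (x 0) else ψ n (c + 1) (x (c + 1)))
              * conj (um n c (x (c + 1)))
            - ψ n c (x c) * conj (um n c (x c)))
        + (Δt : ℂ) * (∫ t in (x c)..(x (c + 1)),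
            (ψ n c t * derivWithin (fun y => conj (um n c y)) (Set.Icc (x c) (x (c + 1))) t
              - (Qh t : ℂ) * (um n c t * conj (um n c t))))
        - (∫ t in (x c)..(x (c + 1)), um n c t * conj (um n c t) * (ΔW n t : ℂ)) = 0)
    (hE2 : ∀ n < N, ∀ c < J,
      (∫ t in (x c)..(x (c + 1)), ψ n c t * conj (ψ n c t))
        + (∫ t in (x c)..(x (c + 1)),
            um n c t * derivWithin (fun y => conj (ψ n c y)) (Set.Icc (x c) (x (c + 1))) t)
        - (um n c (x (c + 1)) * conj (ψ n c (x (c + 1)))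
            - (if c = 0 then um n (J - 1) (x J) else um n (c - 1) (x c))
                * conj (ψ n c (x c))) = 0) :
    ∑ c ∈ Finset.range J, ∫ t in (x c)..(x (c + 1)), ‖u N c t‖ ^ 2
      = ∑ c ∈ Finset.range J, ∫ t in (x c)..(x (c + 1)), ‖u 0 c t‖ ^ 2 := by
  have main : ∀ n ≤ N,
      (∑ c ∈ Finset.range J, ∫ t in (x c)..(x (c + 1)), Complex.normSq (u n c t))
        = ∑ c ∈ Finset.range J, ∫ t in (x c)..(x (c + 1)), Complex.normSq (u 0 c t) := by
    intro n
    induction n with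
    | zero => intro _; rfl
    | succ m ih =>
      intro hmN
      have hmN' : m < N := lt_of_lt_of_le (Nat.lt_succ_self m) hmN
      have hstep := ldg_step Δt J hJ x hx (u m) (u (m + 1)) (ψ m) (um m)
        (fun c hc => hureg m hmN'.le c hc) (fun c hc => hureg (m + 1) hmN' c hc)
        (fun c hc => hψreg m hmN' c hc) Qh hQ (ΔW m) (hW m hmN')
        (fun c => hum m c) (hE1 m hmN') (hE2 m hmN')
      rw [hstep]
      exact ih hmN'.le
  have h := main N le_rfl
  simpa only [Complex.sq_norm] using h
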